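/- Correctness of normalization for MLC: for every term Γ ⊢ t : A of MLC there exists a normal form n with Γ ⊢nf n : A such that Γ ⊢ t ≡ n : A in the equational theory of MLC (viewing the normal form as a term via the evident embedding). -/

import Mathlib

/-- Types of MLC: base, unit, products, functions and the modal type ◇. -/
inductive Ty : Type
  | base : Ty
  | unit : Ty
  | prod : Ty → Ty → Ty
  | arr : Ty → Ty → Ty
  | dia : Ty → Ty

/-- Typing contexts: lists of types (de Bruijn; the head is the most
recently bound variable). -/
abbrev Ctx := List Ty

/-- Raw terms of MLC with de Bruijn indices. -/
inductive Tm : Type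
  | var : ℕ → Tm
  | unit : Tm
  | pair : Tm → Tm → Tm
  | fst : Tm → Tm
  | snd : Tm → Tm
  | lam : Tm → Tm
  | app : Tm → Tm → Tm
  | ret : Tm → Tm                 -- return t
  | lett : Tm → Tm → Tm           -- let x = t in u

/-- Lifting of a renaming under a binder. -/
def liftRen (ρ : ℕ → ℕ) : ℕ → ℕ
  | 0 => 0
  | n + 1 => ρ n + 1

/-- Renaming of the variables of a term. -/
def rename (ρ : ℕ → ℕ) : Tm → Tm
  | .var n => .var (ρ n)
  | .unit => .unit
  | .pair t u => .pair (rename ρ t) (rename ρ u)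
  | .fst t => .fst (rename ρ t)
  | .snd t => .snd (rename ρ t)
  | .lam t => .lam (rename (liftRen ρ) t)
  | .app t u => .app (rename ρ t) (rename ρ u)
  | .ret t => .ret (rename ρ t)
  | .lett t u => .lett (rename ρ t) (rename (liftRen ρ) u)

/-- The typing judgment `Γ ⊢ t : A` of MLC. -/
inductive HasTy : Ctx → Tm → Ty → Prop
  | var {Γ : Ctx} {n : ℕ} {A : Ty} : Γ[n]? = some A → HasTy Γ (.var n) A
  | unit {Γ : Ctx} : HasTy Γ .unit .unit
  | pair {Γ t u A B} : HasTy Γ t A → HasTy Γ u B → HasTy Γ (.pair t u) (.prod A B)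
  | fst {Γ t A B} : HasTy Γ t (.prod A B) → HasTy Γ (.fst t) A
  | snd {Γ t A B} : HasTy Γ t (.prod A B) → HasTy Γ (.snd t) B
  | lam {Γ t A B} : HasTy (A :: Γ) t B → HasTy Γ (.lam t) (.arr A B)
  | app {Γ t u A B} : HasTy Γ t (.arr A B) → HasTy Γ u A → HasTy Γ (.app t u) B
  | ret {Γ t A} : HasTy Γ t A → HasTy Γ (.ret t) (.dia A)
  | lett {Γ t u A B} : HasTy Γ t (.dia A) → HasTy (A :: Γ) u (.dia B) →
      HasTy Γ (.lett t u) (.dia B)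

/-- Capture-avoiding substitution `subst k u t` of the term `u` for the
variable `k` in `t`. -/
def subst (k : ℕ) (u : Tm) : Tm → Tm
  | .var n => if n < k then .var n else if n = k then rename (· + k) u else .var (n - 1)
  | .unit => .unit
  | .pair t t' => .pair (subst k u t) (subst k u t')
  | .fst t => .fst (subst k u t)
  | .snd t => .snd (subst k u t)
  | .lam t => .lam (subst (k + 1) u t)
  | .app t t' => .app (subst k u t) (subst k u t')
  | .ret t => .ret (subst k u t)
  | .lett t t' => .lett (subst k u t) (subst (k + 1) u t')

/-- The equational theory `Γ ⊢ t ≡ u : A` of MLC: the congruence generated by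
⊤-η, ×-β, ×-η, →-β, →-η, ◇-β, ◇-η and ◇-associativity. -/
inductive EqTm : Ctx → Tm → Tm → Ty → Prop
  | refl {Γ t A} : HasTy Γ t A → EqTm Γ t t A
  | symm {Γ t u A} : EqTm Γ t u A → EqTm Γ u t A
  | trans {Γ t u v A} : EqTm Γ t u A → EqTm Γ u v A → EqTm Γ t v A
  | pair_congr {Γ t t' u u' A B} : EqTm Γ t t' A → EqTm Γ u u' B →
      EqTm Γ (.pair t u) (.pair t' u') (.prod A B)
  | fst_congr {Γ t t' A B} : EqTm Γ t t' (.prod A B) → EqTm Γ (.fst t) (.fst t') A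
  | snd_congr {Γ t t' A B} : EqTm Γ t t' (.prod A B) → EqTm Γ (.snd t) (.snd t') B
  | lam_congr {Γ t t' A B} : EqTm (A :: Γ) t t' B → EqTm Γ (.lam t) (.lam t') (.arr A B)
  | app_congr {Γ t t' u u' A B} : EqTm Γ t t' (.arr A B) → EqTm Γ u u' A →
      EqTm Γ (.app t u) (.app t' u') B
  | ret_congr {Γ t t' A} : EqTm Γ t t' A → EqTm Γ (.ret t) (.ret t') (.dia A)
  | lett_congr {Γ t t' u u' A B} : EqTm Γ t t' (.dia A) → EqTm (A :: Γ) u u' (.dia B) →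
      EqTm Γ (.lett t u) (.lett t' u') (.dia B)
  | unit_eta {Γ t} : HasTy Γ t .unit → EqTm Γ t .unit .unit
  | prod_beta1 {Γ t u A B} : HasTy Γ t A → HasTy Γ u B →
      EqTm Γ (.fst (.pair t u)) t A
  | prod_beta2 {Γ t u A B} : HasTy Γ t A → HasTy Γ u B →
      EqTm Γ (.snd (.pair t u)) u B
  | prod_eta {Γ t A B} : HasTy Γ t (.prod A B) →
      EqTm Γ t (.pair (.fst t) (.snd t)) (.prod A B)
  | arr_beta {Γ t u A B} : HasTy (A :: Γ) t B → HasTy Γ u A →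
      EqTm Γ (.app (.lam t) u) (subst 0 u t) B
  | arr_eta {Γ t A B} : HasTy Γ t (.arr A B) →
      EqTm Γ t (.lam (.app (rename Nat.succ t) (.var 0))) (.arr A B)
  | dia_beta {Γ t u A B} : HasTy Γ t A → HasTy (A :: Γ) u (.dia B) →
      EqTm Γ (.lett (.ret t) u) (subst 0 t u) (.dia B)
  | dia_eta {Γ t A} : HasTy Γ t (.dia A) →
      EqTm Γ t (.lett t (.ret (.var 0))) (.dia A)
  | dia_ass {Γ t u u' A B C} : HasTy Γ t (.dia A) → HasTy (A :: Γ) u (.dia B) →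
      HasTy (B :: Γ) u' (.dia C) →
      EqTm Γ (.lett (.lett t u) u')
        (.lett t (.lett u (rename (liftRen Nat.succ) u'))) (.dia C)

mutual
  /-- Neutral terms `Γ ⊢ne n : A` of MLC. -/
  inductive Neu : Ctx → Tm → Ty → Prop
    | var {Γ n A} : Γ[n]? = some A → Neu Γ (.var n) A
    | fst {Γ t A B} : Neu Γ t (.prod A B) → Neu Γ (.fst t) A
    | snd {Γ t A B} : Neu Γ t (.prod A B) → Neu Γ (.snd t) B
    | app {Γ t u A B} : Neu Γ t (.arr A B) → Nf Γ u A → Neu Γ (.app t u) B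

  /-- Normal forms `Γ ⊢nf n : A` of MLC. -/
  inductive Nf : Ctx → Tm → Ty → Prop
    | up {Γ t} : Neu Γ t .base → Nf Γ t .base
    | unit {Γ} : Nf Γ .unit .unit
    | pair {Γ t u A B} : Nf Γ t A → Nf Γ u B → Nf Γ (.pair t u) (.prod A B)
    | lam {Γ t A B} : Nf (A :: Γ) t B → Nf Γ (.lam t) (.arr A B)
    | ret {Γ t A} : Nf Γ t A → Nf Γ (.ret t) (.dia A)
    | lett {Γ t u A B} : Neu Γ t (.dia A) → Nf (A :: Γ) u (.dia B) →
        Nf Γ (.lett t u) (.dia B)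
end

namespace MLCProof

/-! ### Syntactic lemmas: renaming and parallel substitution -/

def scons (u : Tm) (σ : ℕ → Tm) : ℕ → Tm
  | 0 => u
  | n + 1 => σ n

def liftSub (σ : ℕ → Tm) : ℕ → Tm := scons (.var 0) (fun n => rename Nat.succ (σ n))

def psub (σ : ℕ → Tm) : Tm → Tm
  | .var n => σ n
  | .unit => .unit
  | .pair t u => .pair (psub σ t) (psub σ u)
  | .fst t => .fst (psub σ t)
  | .snd t => .snd (psub σ t)
  | .lam t => .lam (psub (liftSub σ) t)
  | .app t u => .app (psub σ t) (psub σ u)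
  | .ret t => .ret (psub σ t)
  | .lett t u => .lett (psub σ t) (psub (liftSub σ) u)

lemma liftRen_comp (ρ ρ' : ℕ → ℕ) : liftRen (fun n => ρ (ρ' n)) = fun n => liftRen ρ (liftRen ρ' n) := by
  funext n; cases n <;> simp [liftRen]

lemma rename_comp (ρ ρ' : ℕ → ℕ) (t : Tm) :
    rename ρ (rename ρ' t) = rename (fun n => ρ (ρ' n)) t := by
  induction t generalizing ρ ρ' <;> simp [rename, liftRen_comp, *]

lemma liftRen_id : liftRen id = id := by funext n; cases n <;> simp [liftRen]

lemma rename_id (t : Tm) : rename id t = t := by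
  induction t <;> simp [rename, liftRen_id, *]

lemma liftSub_ren (σ : ℕ → Tm) (ρ : ℕ → ℕ) :
    liftSub (fun n => σ (ρ n)) = fun n => liftSub σ (liftRen ρ n) := by
  funext n; cases n <;> simp [liftSub, scons, liftRen]

lemma psub_rename (σ : ℕ → Tm) (ρ : ℕ → ℕ) (t : Tm) :
    psub σ (rename ρ t) = psub (fun n => σ (ρ n)) t := by
  induction t generalizing σ ρ <;> simp [rename, psub, liftSub_ren, *]

lemma ren_liftSub (ρ : ℕ → ℕ) (σ : ℕ → Tm) :
    (fun n => rename (liftRen ρ) (liftSub σ n)) = liftSub (fun n => rename ρ (σ n)) := by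
  funext n
  cases n with
  | zero => simp [liftSub, scons, rename, liftRen]
  | succ n =>
    show rename (liftRen ρ) (rename Nat.succ (σ n)) = rename Nat.succ (rename ρ (σ n))
    rw [rename_comp, rename_comp]
    congr 1

lemma rename_psub (ρ : ℕ → ℕ) (σ : ℕ → Tm) (t : Tm) :
    rename ρ (psub σ t) = psub (fun n => rename ρ (σ n)) t := by
  induction t generalizing σ ρ <;> simp [rename, psub, ren_liftSub, *]

lemma psub_liftSub (σ σ' : ℕ → Tm) :
    (fun n => psub (liftSub σ) (liftSub σ' n)) = liftSub (fun n => psub σ (σ' n)) := by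
  funext n
  cases n with
  | zero => simp [liftSub, scons, psub]
  | succ n =>
    show psub (liftSub σ) (rename Nat.succ (σ' n)) = rename Nat.succ (psub σ (σ' n))
    rw [psub_rename, rename_psub]
    congr 1

lemma psub_comp (σ σ' : ℕ → Tm) (t : Tm) :
    psub σ (psub σ' t) = psub (fun n => psub σ (σ' n)) t := by
  induction t generalizing σ σ' <;> simp [psub, psub_liftSub, *]

lemma liftSub_var : liftSub Tm.var = Tm.var := by
  funext n; cases n <;> simp [liftSub, scons, rename]

lemma psub_var (t : Tm) : psub Tm.var t = t := by
  induction t <;> simp [psub, liftSub_var, *]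

/-- The substitution function corresponding to `subst k u`. -/
def sσ (k : ℕ) (u : Tm) : ℕ → Tm := fun n =>
  if n < k then .var n else if n = k then rename (· + k) u else .var (n - 1)

lemma sσ_succ (k : ℕ) (u : Tm) : sσ (k + 1) u = liftSub (sσ k u) := by
  funext n
  cases n with
  | zero => simp [sσ, liftSub, scons]
  | succ n =>
    show (if n + 1 < k + 1 then Tm.var (n+1) else if n + 1 = k + 1 then rename (· + (k+1)) u else Tm.var (n+1-1))
        = rename Nat.succ (if n < k then Tm.var n else if n = k then rename (· + k) u else Tm.var (n-1))
    rcases lt_trichotomy n k with h | h | h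
    · rw [if_pos (by omega : n + 1 < k + 1), if_pos h]; rfl
    · subst h
      rw [if_neg (by omega), if_pos rfl, if_neg (by omega), if_pos rfl, rename_comp]
      congr 1
    · rw [if_neg (by omega), if_neg (by omega), if_neg (by omega), if_neg (by omega)]
      show Tm.var (n + 1 - 1) = Tm.var (Nat.succ (n - 1))
      congr 1; omega

lemma subst_eq (t : Tm) : ∀ (k : ℕ) (u : Tm), subst k u t = psub (sσ k u) t := by
  induction t <;> intro k u <;> simp [subst, psub, sσ_succ, sσ, *]

lemma sσ_zero (u : Tm) : sσ 0 u = scons u Tm.var := by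
  funext n
  cases n with
  | zero =>
    show (if 0 < 0 then Tm.var 0 else if 0 = 0 then rename (· + 0) u else Tm.var (0-1)) = u
    rw [if_neg (lt_irrefl 0), if_pos rfl,
      show ((· + 0) : ℕ → ℕ) = id from funext fun m => rfl, rename_id]
  | succ n => simp [sσ, scons]

lemma subst_zero (u t : Tm) : subst 0 u t = psub (scons u Tm.var) t := by
  rw [subst_eq, sσ_zero]

end MLCProof
namespace MLCProof

/-! ### Typing under renamings and substitutions -/

def Ren (ρ : ℕ → ℕ) (Γ Δ : Ctx) : Prop :=
  ∀ n A, Γ[n]? = some A → Δ[ρ n]? = some A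

lemma ren_id (Γ : Ctx) : Ren id Γ Γ := fun _ _ h => h

lemma ren_succ (Γ : Ctx) (A : Ty) : Ren Nat.succ Γ (A :: Γ) := fun _ _ h => h

lemma ren_comp {ρ ρ' : ℕ → ℕ} {Γ Δ E : Ctx} (h : Ren ρ Γ Δ) (h' : Ren ρ' Δ E) :
    Ren (fun n => ρ' (ρ n)) Γ E := fun n A hn => h' _ _ (h n A hn)

lemma ren_lift {ρ : ℕ → ℕ} {Γ Δ : Ctx} (h : Ren ρ Γ Δ) (A : Ty) :
    Ren (liftRen ρ) (A :: Γ) (A :: Δ) := by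
  intro n B hn
  cases n with
  | zero => simpa [liftRen] using hn
  | succ n => exact h n B hn

lemma hasTy_rename {Γ : Ctx} {t : Tm} {A : Ty} (h : HasTy Γ t A) :
    ∀ {Δ ρ}, Ren ρ Γ Δ → HasTy Δ (rename ρ t) A := by
  induction h with
  | var hn => exact fun hρ => HasTy.var (hρ _ _ hn)
  | unit => exact fun _ => HasTy.unit
  | pair _ _ ih1 ih2 => exact fun hρ => HasTy.pair (ih1 hρ) (ih2 hρ)
  | fst _ ih => exact fun hρ => HasTy.fst (ih hρ)
  | snd _ ih => exact fun hρ => HasTy.snd (ih hρ)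
  | lam _ ih => exact fun hρ => HasTy.lam (ih (ren_lift hρ _))
  | app _ _ ih1 ih2 => exact fun hρ => HasTy.app (ih1 hρ) (ih2 hρ)
  | ret _ ih => exact fun hρ => HasTy.ret (ih hρ)
  | lett _ _ ih1 ih2 => exact fun hρ => HasTy.lett (ih1 hρ) (ih2 (ren_lift hρ _))

def SubTy (σ : ℕ → Tm) (Γ Δ : Ctx) : Prop :=
  ∀ n A, Γ[n]? = some A → HasTy Δ (σ n) A

lemma subTy_lift {σ : ℕ → Tm} {Γ Δ : Ctx} (h : SubTy σ Γ Δ) (A : Ty) :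
    SubTy (liftSub σ) (A :: Γ) (A :: Δ) := by
  intro n B hn
  cases n with
  | zero =>
    simp only [List.getElem?_cons_zero] at hn
    cases hn
    exact HasTy.var rfl
  | succ n => exact hasTy_rename (h n B hn) (ren_succ Δ A)

lemma hasTy_psub {Γ : Ctx} {t : Tm} {A : Ty} (h : HasTy Γ t A) :
    ∀ {Δ σ}, SubTy σ Γ Δ → HasTy Δ (psub σ t) A := by
  induction h with
  | var hn => exact fun hσ => hσ _ _ hn
  | unit => exact fun _ => HasTy.unit
  | pair _ _ ih1 ih2 => exact fun hσ => HasTy.pair (ih1 hσ) (ih2 hσ)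
  | fst _ ih => exact fun hσ => HasTy.fst (ih hσ)
  | snd _ ih => exact fun hσ => HasTy.snd (ih hσ)
  | lam _ ih => exact fun hσ => HasTy.lam (ih (subTy_lift hσ _))
  | app _ _ ih1 ih2 => exact fun hσ => HasTy.app (ih1 hσ) (ih2 hσ)
  | ret _ ih => exact fun hσ => HasTy.ret (ih hσ)
  | lett _ _ ih1 ih2 => exact fun hσ => HasTy.lett (ih1 hσ) (ih2 (subTy_lift hσ _))

lemma rename_subst0 (ρ : ℕ → ℕ) (u t : Tm) :
    rename ρ (subst 0 u t) = subst 0 (rename ρ u) (rename (liftRen ρ) t) := by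
  rw [subst_zero, subst_zero, rename_psub, psub_rename]
  congr 1
  funext n
  cases n with
  | zero => rfl
  | succ n => rfl

lemma rename_arr_eta (ρ : ℕ → ℕ) (t : Tm) :
    rename (liftRen ρ) (rename Nat.succ t) = rename Nat.succ (rename ρ t) := by
  rw [rename_comp, rename_comp]
  congr 1

lemma rename_dia_ass (ρ : ℕ → ℕ) (u' : Tm) :
    rename (liftRen (liftRen ρ)) (rename (liftRen Nat.succ) u')
      = rename (liftRen Nat.succ) (rename (liftRen ρ) u') := by
  rw [rename_comp, rename_comp]
  congr 1
  funext n
  cases n <;> rfl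

lemma eqTm_rename {Γ : Ctx} {t u : Tm} {A : Ty} (h : EqTm Γ t u A) :
    ∀ {Δ ρ}, Ren ρ Γ Δ → EqTm Δ (rename ρ t) (rename ρ u) A := by
  induction h with
  | refl h => exact fun hρ => EqTm.refl (hasTy_rename h hρ)
  | symm _ ih => exact fun hρ => (ih hρ).symm
  | trans _ _ ih1 ih2 => exact fun hρ => (ih1 hρ).trans (ih2 hρ)
  | pair_congr _ _ ih1 ih2 => exact fun hρ => EqTm.pair_congr (ih1 hρ) (ih2 hρ)
  | fst_congr _ ih => exact fun hρ => EqTm.fst_congr (ih hρ)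
  | snd_congr _ ih => exact fun hρ => EqTm.snd_congr (ih hρ)
  | lam_congr _ ih => exact fun hρ => EqTm.lam_congr (ih (ren_lift hρ _))
  | app_congr _ _ ih1 ih2 => exact fun hρ => EqTm.app_congr (ih1 hρ) (ih2 hρ)
  | ret_congr _ ih => exact fun hρ => EqTm.ret_congr (ih hρ)
  | lett_congr _ _ ih1 ih2 =>
    exact fun hρ => EqTm.lett_congr (ih1 hρ) (ih2 (ren_lift hρ _))
  | unit_eta h => exact fun hρ => EqTm.unit_eta (hasTy_rename h hρ)
  | prod_beta1 h1 h2 =>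
    exact fun hρ => EqTm.prod_beta1 (hasTy_rename h1 hρ) (hasTy_rename h2 hρ)
  | prod_beta2 h1 h2 =>
    exact fun hρ => EqTm.prod_beta2 (hasTy_rename h1 hρ) (hasTy_rename h2 hρ)
  | prod_eta h => exact fun hρ => EqTm.prod_eta (hasTy_rename h hρ)
  | arr_beta h1 h2 =>
    intro Δ ρ hρ
    rw [rename, rename_subst0]
    exact EqTm.arr_beta (hasTy_rename h1 (ren_lift hρ _)) (hasTy_rename h2 hρ)
  | arr_eta h =>
    intro Δ ρ hρ
    have := EqTm.arr_eta (hasTy_rename h hρ)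
    rw [rename, rename, rename, rename_arr_eta] at *
    exact this
  | dia_beta h1 h2 =>
    intro Δ ρ hρ
    rw [rename, rename, rename_subst0]
    exact EqTm.dia_beta (hasTy_rename h1 hρ) (hasTy_rename h2 (ren_lift hρ _))
  | dia_eta h =>
    intro Δ ρ hρ
    exact EqTm.dia_eta (hasTy_rename h hρ)
  | dia_ass h1 h2 h3 =>
    intro Δ ρ hρ
    have := EqTm.dia_ass (hasTy_rename h1 hρ) (hasTy_rename h2 (ren_lift hρ _))
      (hasTy_rename h3 (ren_lift hρ _))
    simp only [rename] at *
    rw [rename_dia_ass]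
    exact this

/-! ### Neutral and normal forms: renaming and typing -/

lemma neu_nf_rename (t : Tm) :
    (∀ {Γ Δ A ρ}, Ren ρ Γ Δ → Neu Γ t A → Neu Δ (rename ρ t) A) ∧
    (∀ {Γ Δ A ρ}, Ren ρ Γ Δ → Nf Γ t A → Nf Δ (rename ρ t) A) := by
  induction t with
  | var n =>
    refine ⟨fun hρ h => ?_, fun hρ h => ?_⟩
    · cases h with | var hn => exact Neu.var (hρ _ _ hn)
    · cases h with | up h => cases h with | var hn => exact Nf.up (Neu.var (hρ _ _ hn))
  | unit =>
    refine ⟨fun hρ h => ?_, fun hρ h => ?_⟩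
    · cases h
    · cases h with
      | up h => cases h
      | unit => exact Nf.unit
  | pair t u iht ihu =>
    refine ⟨fun hρ h => ?_, fun hρ h => ?_⟩
    · cases h
    · cases h with
      | up h => cases h
      | pair h1 h2 => exact Nf.pair (iht.2 hρ h1) (ihu.2 hρ h2)
  | fst t iht =>
    refine ⟨fun hρ h => ?_, fun hρ h => ?_⟩
    · cases h with | fst h => exact Neu.fst (iht.1 hρ h)
    · cases h with | up h => cases h with | fst h => exact Nf.up (Neu.fst (iht.1 hρ h))
  | snd t iht =>
    refine ⟨fun hρ h => ?_, fun hρ h => ?_⟩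
    · cases h with | snd h => exact Neu.snd (iht.1 hρ h)
    · cases h with | up h => cases h with | snd h => exact Nf.up (Neu.snd (iht.1 hρ h))
  | lam t iht =>
    refine ⟨fun hρ h => ?_, fun hρ h => ?_⟩
    · cases h
    · cases h with
      | up h => cases h
      | lam h => exact Nf.lam (iht.2 (ren_lift hρ _) h)
  | app t u iht ihu =>
    refine ⟨fun hρ h => ?_, fun hρ h => ?_⟩
    · cases h with | app h1 h2 => exact Neu.app (iht.1 hρ h1) (ihu.2 hρ h2)
    · cases h with
      | up h => cases h with | app h1 h2 => exact Nf.up (Neu.app (iht.1 hρ h1) (ihu.2 hρ h2))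
  | ret t iht =>
    refine ⟨fun hρ h => ?_, fun hρ h => ?_⟩
    · cases h
    · cases h with
      | up h => cases h
      | ret h => exact Nf.ret (iht.2 hρ h)
  | lett t u iht ihu =>
    refine ⟨fun hρ h => ?_, fun hρ h => ?_⟩
    · cases h
    · cases h with
      | up h => cases h
      | lett h1 h2 => exact Nf.lett (iht.1 hρ h1) (ihu.2 (ren_lift hρ _) h2)

lemma neu_rename {Γ Δ : Ctx} {t : Tm} {A : Ty} {ρ : ℕ → ℕ}
    (hρ : Ren ρ Γ Δ) (h : Neu Γ t A) : Neu Δ (rename ρ t) A :=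
  (neu_nf_rename t).1 hρ h

lemma nf_rename {Γ Δ : Ctx} {t : Tm} {A : Ty} {ρ : ℕ → ℕ}
    (hρ : Ren ρ Γ Δ) (h : Nf Γ t A) : Nf Δ (rename ρ t) A :=
  (neu_nf_rename t).2 hρ h

lemma neu_nf_hasTy (t : Tm) :
    (∀ {Γ A}, Neu Γ t A → HasTy Γ t A) ∧ (∀ {Γ A}, Nf Γ t A → HasTy Γ t A) := by
  induction t with
  | var n =>
    refine ⟨fun h => ?_, fun h => ?_⟩
    · cases h with | var hn => exact HasTy.var hn
    · cases h with | up h => cases h with | var hn => exact HasTy.var hn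
  | unit =>
    refine ⟨fun h => ?_, fun h => ?_⟩
    · cases h
    · cases h with
      | up h => cases h
      | unit => exact HasTy.unit
  | pair t u iht ihu =>
    refine ⟨fun h => ?_, fun h => ?_⟩
    · cases h
    · cases h with
      | up h => cases h
      | pair h1 h2 => exact HasTy.pair (iht.2 h1) (ihu.2 h2)
  | fst t iht =>
    refine ⟨fun h => ?_, fun h => ?_⟩
    · cases h with | fst h => exact HasTy.fst (iht.1 h)
    · cases h with | up h => cases h with | fst h => exact HasTy.fst (iht.1 h)
  | snd t iht =>
    refine ⟨fun h => ?_, fun h => ?_⟩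
    · cases h with | snd h => exact HasTy.snd (iht.1 h)
    · cases h with | up h => cases h with | snd h => exact HasTy.snd (iht.1 h)
  | lam t iht =>
    refine ⟨fun h => ?_, fun h => ?_⟩
    · cases h
    · cases h with
      | up h => cases h
      | lam h => exact HasTy.lam (iht.2 h)
  | app t u iht ihu =>
    refine ⟨fun h => ?_, fun h => ?_⟩
    · cases h with | app h1 h2 => exact HasTy.app (iht.1 h1) (ihu.2 h2)
    · cases h with
      | up h => cases h with | app h1 h2 => exact HasTy.app (iht.1 h1) (ihu.2 h2)
  | ret t iht =>
    refine ⟨fun h => ?_, fun h => ?_⟩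
    · cases h
    · cases h with
      | up h => cases h
      | ret h => exact HasTy.ret (iht.2 h)
  | lett t u iht ihu =>
    refine ⟨fun h => ?_, fun h => ?_⟩
    · cases h
    · cases h with
      | up h => cases h
      | lett h1 h2 => exact HasTy.lett (iht.1 h1) (ihu.2 h2)

lemma neu_hasTy {Γ : Ctx} {t : Tm} {A : Ty} (h : Neu Γ t A) : HasTy Γ t A :=
  (neu_nf_hasTy t).1 h

lemma nf_hasTy {Γ : Ctx} {t : Tm} {A : Ty} (h : Nf Γ t A) : HasTy Γ t A :=
  (neu_nf_hasTy t).2 h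

end MLCProof
namespace MLCProof

/-! ### The Kripke logical predicate -/

/-- Monadic decomposition: a tree of `lett`s over neutrals ending in a `ret`
of a term satisfying `P`. -/
inductive DG (P : Ctx → Tm → Prop) : Ctx → Tm → Prop
  | ret {Γ u} : P Γ u → DG P Γ (.ret u)
  | lett {Γ n u B} : Neu Γ n (.dia B) → DG P (B :: Γ) u → DG P Γ (.lett n u)

/-- The Kripke logical predicate. -/
def Good : Ty → Ctx → Tm → Prop
  | .base, Γ, t => HasTy Γ t .base ∧ ∃ n, Neu Γ n .base ∧ EqTm Γ t n .base
  | .unit, Γ, t => HasTy Γ t .unit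
  | .prod A B, Γ, t => HasTy Γ t (.prod A B) ∧ Good A Γ (.fst t) ∧ Good B Γ (.snd t)
  | .arr A B, Γ, t => HasTy Γ t (.arr A B) ∧
      ∀ Δ ρ, Ren ρ Γ Δ → ∀ u, Good A Δ u → Good B Δ (.app (rename ρ t) u)
  | .dia A, Γ, t => HasTy Γ t (.dia A) ∧ ∃ v, DG (Good A) Γ v ∧ EqTm Γ t v (.dia A)

lemma good_hasTy : ∀ {A Γ t}, Good A Γ t → HasTy Γ t A
  | .base, _, _, h => h.1
  | .unit, _, _, h => h
  | .prod _ _, _, _, h => h.1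
  | .arr _ _, _, _, h => h.1
  | .dia _, _, _, h => h.1

/-- `Good` is closed under the equational theory. -/
lemma good_eq : ∀ {A Γ t t'}, Good A Γ t → EqTm Γ t' t A → HasTy Γ t' A → Good A Γ t'
  | .base, _, _, _, h, he, ht => ⟨ht, h.2.imp fun _ hn => ⟨hn.1, he.trans hn.2⟩⟩
  | .unit, _, _, _, _, _, ht => ht
  | .prod _ _, _, _, _, h, he, ht =>
    ⟨ht, good_eq h.2.1 (EqTm.fst_congr he) (HasTy.fst ht),
      good_eq h.2.2 (EqTm.snd_congr he) (HasTy.snd ht)⟩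
  | .arr _ _, _, _, _, h, he, ht =>
    ⟨ht, fun Δ ρ hρ u hu =>
      good_eq (h.2 Δ ρ hρ u hu)
        (EqTm.app_congr (eqTm_rename he hρ) (EqTm.refl (good_hasTy hu)))
        (HasTy.app (hasTy_rename ht hρ) (good_hasTy hu))⟩
  | .dia _, _, _, _, h, he, ht => ⟨ht, h.2.imp fun _ hv => ⟨hv.1, he.trans hv.2⟩⟩

lemma dg_rename {P : Ctx → Tm → Prop}
    (hP : ∀ {Γ Δ ρ t}, Ren ρ Γ Δ → P Γ t → P Δ (rename ρ t)) :
    ∀ {Γ v}, DG P Γ v → ∀ {Δ ρ}, Ren ρ Γ Δ → DG P Δ (rename ρ v) := by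
  intro Γ v h
  induction h with
  | ret hu => exact fun hρ => DG.ret (hP hρ hu)
  | lett hn _ ih => exact fun hρ => DG.lett (neu_rename hρ hn) (ih (ren_lift hρ _))

lemma dg_hasTy {A : Ty} : ∀ {Γ v}, DG (Good A) Γ v → HasTy Γ v (.dia A) := by
  intro Γ v h
  induction h with
  | ret hw => exact HasTy.ret (good_hasTy hw)
  | lett hn _ ih => exact HasTy.lett (neu_hasTy hn) ih

/-- Monotonicity of `Good` under renamings. -/
lemma good_mono {A : Ty} : ∀ {Γ t}, Good A Γ t → ∀ {Δ ρ}, Ren ρ Γ Δ → Good A Δ (rename ρ t) := by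
  induction A with
  | base =>
    intro Γ t h Δ ρ hρ
    obtain ⟨ht, n, hn, he⟩ := h
    exact ⟨hasTy_rename ht hρ, rename ρ n, neu_rename hρ hn, eqTm_rename he hρ⟩
  | unit => intro Γ t h Δ ρ hρ; exact hasTy_rename h hρ
  | prod A B ihA ihB =>
    intro Γ t h Δ ρ hρ
    exact ⟨hasTy_rename h.1 hρ, ihA h.2.1 hρ, ihB h.2.2 hρ⟩
  | arr A B ihA ihB =>
    intro Γ t h Δ ρ hρ
    refine ⟨hasTy_rename h.1 hρ, fun Δ' ρ' hρ' u hu => ?_⟩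
    rw [rename_comp]
    exact h.2 Δ' _ (ren_comp hρ hρ') u hu
  | dia A ihA =>
    intro Γ t h Δ ρ hρ
    obtain ⟨ht, v, hv, he⟩ := h
    exact ⟨hasTy_rename ht hρ, rename ρ v,
      dg_rename (fun hρ' h' => ihA h' hρ') hv hρ, eqTm_rename he hρ⟩

/-- Reflection of neutrals and reification of good terms. -/
lemma reflect_reify (A : Ty) :
    (∀ {Γ n}, Neu Γ n A → Good A Γ n) ∧
    (∀ {Γ t}, Good A Γ t → ∃ m, Nf Γ m A ∧ EqTm Γ t m A) := by
  induction A with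
  | base =>
    refine ⟨fun {Γ n} h => ?_, fun {Γ t} h => ?_⟩
    · exact ⟨neu_hasTy h, n, h, EqTm.refl (neu_hasTy h)⟩
    · obtain ⟨ht, n, hn, he⟩ := h
      exact ⟨n, Nf.up hn, he⟩
  | unit =>
    refine ⟨fun {Γ n} h => neu_hasTy h, fun {Γ t} h => ?_⟩
    exact ⟨.unit, Nf.unit, EqTm.unit_eta h⟩
  | prod A B ihA ihB =>
    refine ⟨fun {Γ n} h => ?_, fun {Γ t} h => ?_⟩
    · exact ⟨neu_hasTy h, ihA.1 (Neu.fst h), ihB.1 (Neu.snd h)⟩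
    · obtain ⟨ht, h1, h2⟩ := h
      obtain ⟨m1, hm1, he1⟩ := ihA.2 h1
      obtain ⟨m2, hm2, he2⟩ := ihB.2 h2
      exact ⟨.pair m1 m2, Nf.pair hm1 hm2,
        (EqTm.prod_eta ht).trans (EqTm.pair_congr he1 he2)⟩
  | arr A B ihA ihB =>
    refine ⟨fun {Γ n} h => ?_, fun {Γ t} h => ?_⟩
    · refine ⟨neu_hasTy h, fun Δ ρ hρ u hu => ?_⟩
      obtain ⟨m, hm, he⟩ := ihA.2 hu
      have hrn : HasTy Δ (rename ρ n) (.arr A B) := hasTy_rename (neu_hasTy h) hρ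
      exact good_eq (ihB.1 (Neu.app (neu_rename hρ h) hm))
        (EqTm.app_congr (EqTm.refl hrn) he)
        (HasTy.app hrn (good_hasTy hu))
    · have hv : Good A (A :: Γ) (.var 0) := ihA.1 (Neu.var rfl)
      obtain ⟨m, hm, he⟩ := ihB.2 (h.2 (A :: Γ) Nat.succ (ren_succ Γ A) _ hv)
      exact ⟨.lam m, Nf.lam hm, (EqTm.arr_eta h.1).trans (EqTm.lam_congr he)⟩
  | dia A ihA =>
    refine ⟨fun {Γ n} h => ?_, fun {Γ t} h => ?_⟩
    · exact ⟨neu_hasTy h, .lett n (.ret (.var 0)),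
        DG.lett h (DG.ret (ihA.1 (Neu.var rfl))), EqTm.dia_eta (neu_hasTy h)⟩
    · obtain ⟨ht, v, hv, he⟩ := h
      have : ∃ m, Nf Γ m (.dia A) ∧ EqTm Γ v m (.dia A) := by
        clear he ht
        induction hv with
        | ret hw =>
          obtain ⟨m, hm, he'⟩ := ihA.2 hw
          exact ⟨.ret m, Nf.ret hm, EqTm.ret_congr he'⟩
        | lett hn _ ih =>
          obtain ⟨m, hm, he'⟩ := ih
          exact ⟨.lett _ m, Nf.lett hn hm,
            EqTm.lett_congr (EqTm.refl (neu_hasTy hn)) he'⟩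
      obtain ⟨m, hm, he'⟩ := this
      exact ⟨m, hm, he.trans he'⟩

/-! ### Semantic substitutions and the fundamental lemma -/

def GoodSub (Δ : Ctx) (σ : ℕ → Tm) (Γ : Ctx) : Prop :=
  ∀ n A, Γ[n]? = some A → Good A Δ (σ n)

lemma goodSub_subTy {Δ σ Γ} (h : GoodSub Δ σ Γ) : SubTy σ Γ Δ :=
  fun n A hn => good_hasTy (h n A hn)

lemma goodSub_mono {Δ σ Γ Δ' ρ} (h : GoodSub Δ σ Γ) (hρ : Ren ρ Δ Δ') :
    GoodSub Δ' (fun n => rename ρ (σ n)) Γ :=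
  fun n A hn => good_mono (h n A hn) hρ

lemma goodSub_cons {Δ σ Γ A u} (hu : Good A Δ u) (h : GoodSub Δ σ Γ) :
    GoodSub Δ (scons u σ) (A :: Γ) := by
  intro n B hn
  cases n with
  | zero =>
    simp only [List.getElem?_cons_zero] at hn
    cases hn
    exact hu
  | succ n => exact h n B hn

lemma psub_scons_liftSub (u : Tm) (σ : ℕ → Tm) (t : Tm) :
    psub (scons u Tm.var) (psub (liftSub σ) t) = psub (scons u σ) t := by
  rw [psub_comp]
  congr 1
  funext n
  cases n with
  | zero => rfl
  | succ n =>
    show psub (scons u Tm.var) (rename Nat.succ (σ n)) = σ n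
    rw [psub_rename]
    have : (fun m => scons u Tm.var (Nat.succ m)) = Tm.var := funext fun m => rfl
    rw [this, psub_var]

lemma psub_lift_rename (σ : ℕ → Tm) (u : Tm) :
    psub (liftSub (fun n => rename Nat.succ (σ n))) u
      = rename (liftRen Nat.succ) (psub (liftSub σ) u) := by
  rw [rename_psub, ren_liftSub]

/-- Semantic interpretation of `lett` over a monadic decomposition. -/
lemma sem_lett {Γ : Ctx} {u : Tm} {A B : Ty}
    (hu : HasTy (A :: Γ) u (.dia B))
    (ihu : ∀ {Δ σ}, GoodSub Δ σ (A :: Γ) → Good (.dia B) Δ (psub σ u)) :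
    ∀ {Δ v}, DG (Good A) Δ v → ∀ {σ}, GoodSub Δ σ Γ →
      Good (.dia B) Δ (.lett v (psub (liftSub σ) u)) := by
  intro Δ v hv
  induction hv with
  | @ret Δ w hw =>
    intro σ hσ
    have hsty : HasTy (A :: Δ) (psub (liftSub σ) u) (.dia B) :=
      hasTy_psub hu (subTy_lift (goodSub_subTy hσ) A)
    have hg : Good (.dia B) Δ (psub (scons w σ) u) := ihu (goodSub_cons hw hσ)
    have hbeta : EqTm Δ (.lett (.ret w) (psub (liftSub σ) u)) (psub (scons w σ) u) (.dia B) := by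
      have := EqTm.dia_beta (good_hasTy hw) hsty
      rwa [subst_zero, psub_scons_liftSub] at this
    exact good_eq hg hbeta (HasTy.lett (HasTy.ret (good_hasTy hw)) hsty)
  | @lett Δ' n v' C hn hv' ih =>
    intro σ hσ
    have hσ' : GoodSub (C :: Δ') (fun m => rename Nat.succ (σ m)) Γ :=
      goodSub_mono hσ (ren_succ Δ' C)
    have hrec := ih hσ'
    rw [psub_lift_rename] at hrec
    obtain ⟨htrec, w, hw, herec⟩ := hrec
    have hsty : HasTy (A :: Δ') (psub (liftSub σ) u) (.dia B) :=
      hasTy_psub hu (subTy_lift (goodSub_subTy hσ) A)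
    have hv'ty : HasTy (C :: Δ') v' (.dia A) := dg_hasTy hv'
    refine ⟨HasTy.lett (HasTy.lett (neu_hasTy hn) hv'ty) hsty, .lett n w,
      DG.lett hn hw, ?_⟩
    exact (EqTm.dia_ass (neu_hasTy hn) hv'ty hsty).trans
      (EqTm.lett_congr (EqTm.refl (neu_hasTy hn)) herec)

/-- The fundamental lemma of the logical predicate. -/
theorem fundamental {Γ : Ctx} {t : Tm} {A : Ty} (h : HasTy Γ t A) :
    ∀ {Δ σ}, GoodSub Δ σ Γ → Good A Δ (psub σ t) := by
  induction h with
  | var hn => exact fun hσ => hσ _ _ hn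
  | unit => exact fun _ => HasTy.unit
  | pair h1 h2 ih1 ih2 =>
    intro Δ σ hσ
    have g1 := ih1 hσ
    have g2 := ih2 hσ
    have t1 := good_hasTy g1
    have t2 := good_hasTy g2
    exact ⟨HasTy.pair t1 t2,
      good_eq g1 (EqTm.prod_beta1 t1 t2) (HasTy.fst (HasTy.pair t1 t2)),
      good_eq g2 (EqTm.prod_beta2 t1 t2) (HasTy.snd (HasTy.pair t1 t2))⟩
  | fst _ ih => exact fun hσ => (ih hσ).2.1
  | snd _ ih => exact fun hσ => (ih hσ).2.2
  | @lam Γ t A B h ih =>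
    intro Δ σ hσ
    have hty : HasTy Δ (.lam (psub (liftSub σ) t)) (.arr A B) :=
      HasTy.lam (hasTy_psub h (subTy_lift (goodSub_subTy hσ) A))
    refine ⟨hty, fun Δ' ρ hρ u hu => ?_⟩
    show Good B Δ' (.app (.lam (rename (liftRen ρ) (psub (liftSub σ) t))) u)
    have hs2 : rename (liftRen ρ) (psub (liftSub σ) t)
        = psub (liftSub (fun n => rename ρ (σ n))) t := by
      rw [rename_psub, ren_liftSub]
    rw [hs2]
    have hσ' : GoodSub Δ' (fun n => rename ρ (σ n)) Γ := goodSub_mono hσ hρ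
    have hgood : Good B Δ' (psub (scons u (fun n => rename ρ (σ n))) t) :=
      ih (goodSub_cons hu hσ')
    have hsub : HasTy (A :: Δ') (psub (liftSub fun n => rename ρ (σ n)) t) B :=
      hasTy_psub h (subTy_lift (goodSub_subTy hσ') A)
    have hbeta : EqTm Δ' (.app (.lam (psub (liftSub fun n => rename ρ (σ n)) t)) u)
        (psub (scons u (fun n => rename ρ (σ n))) t) B := by
      have := EqTm.arr_beta hsub (good_hasTy hu)
      rwa [subst_zero, psub_scons_liftSub] at this
    exact good_eq hgood hbeta (HasTy.app (HasTy.lam hsub) (good_hasTy hu))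
  | app _ _ ih1 ih2 =>
    intro Δ σ hσ
    have := (ih1 hσ).2 Δ id (ren_id Δ) _ (ih2 hσ)
    rwa [rename_id] at this
  | ret _ ih =>
    intro Δ σ hσ
    have g := ih hσ
    exact ⟨HasTy.ret (good_hasTy g), _, DG.ret g, EqTm.refl (HasTy.ret (good_hasTy g))⟩
  | @lett Γ t u A B h1 h2 ih1 ih2 =>
    intro Δ σ hσ
    obtain ⟨ht1, v, hv, he⟩ := ih1 hσ
    have key : Good (.dia B) Δ (.lett v (psub (liftSub σ) u)) :=
      sem_lett h2 (fun {Δ σ} hσ => ih2 hσ) hv hσ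
    have hsty : HasTy (A :: Δ) (psub (liftSub σ) u) (.dia B) :=
      hasTy_psub h2 (subTy_lift (goodSub_subTy hσ) A)
    exact good_eq key (EqTm.lett_congr he (EqTm.refl hsty)) (HasTy.lett ht1 hsty)

end MLCProof
/-- correctness of normalization for MLC: every well-typed term
`Γ ⊢ t : A` has a normal form `Γ ⊢nf n : A` with `Γ ⊢ t ≡ n : A`. -/
theorem normalization_correct_MLC {Γ : Ctx} {t : Tm} {A : Ty}
    (ht : HasTy Γ t A) : ∃ n : Tm, Nf Γ n A ∧ EqTm Γ t n A := by
  have hσ : MLCProof.GoodSub Γ Tm.var Γ :=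
    fun n B hn => (MLCProof.reflect_reify B).1 (Neu.var hn)
  have hg := MLCProof.fundamental ht hσ
  rw [MLCProof.psub_var] at hg
  exact (MLCProof.reflect_reify A).2 hg
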